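/- arXiv:1306.1242 — 2 statements merged into one kernel-verified Lean document; each statement's English description precedes it below -/
import Mathlib

section
/- Let n ≥ 1 and let k = (k_1, …, k_n) be a regular tuple of integers. There exists J ∈ GSO_{2n}(ℂ) satisfying J D_k(w) J^{−1} = D_k(w)^{−1} for every w ∈ ℂ× and J² = −1 if and only if n is even; moreover every such J has multiplier ν(J) = −1. -/
open Matrix

noncomputable section

/-- 2n×2n matrices, indexed by `Fin n ⊕ Fin n`. -/
abbrev Mat (n : ℕ) (k : Type*) := Matrix (Fin n ⊕ Fin n) (Fin n ⊕ Fin n) k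

/-- The standard split symmetric form matrix `Q_{2n} = [[0, 1], [1, 0]]`. -/
def Qmat (n : ℕ) : Mat n ℂ := fromBlocks 0 1 1 0

/-- `A ∈ GO_{2n}(ℂ)` with multiplier `ν`. -/
def inGO (n : ℕ) (A : Mat n ℂ) (ν : ℂ) : Prop :=
  IsUnit A.det ∧ ν ≠ 0 ∧ Aᵀ * Qmat n * A = ν • Qmat n

/-- `A ∈ GSO_{2n}(ℂ)` with multiplier `ν`: in `GO_{2n}` and `det A = ν ^ n`. -/
def inGSO (n : ℕ) (A : Mat n ℂ) (ν : ℂ) : Prop :=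
  inGO n A ν ∧ A.det = ν ^ n

/-- `D_k(w) = diag(w^{k_1}, …, w^{k_n}, w^{-k_1}, …, w^{-k_n})`. -/
def Dk {n : ℕ} (kk : Fin n → ℤ) (w : ℂ) : Mat n ℂ :=
  Matrix.diagonal (Sum.elim (fun i => w ^ kk i) (fun i => w ^ (-kk i)))

/-- A tuple `(k_1, …, k_n)` of integers is regular if each `k_i` is nonzero and
`k_i ≠ ±k_j` for all `i ≠ j`. -/
def Regular {n : ℕ} (kk : Fin n → ℤ) : Prop :=
  (∀ i, kk i ≠ 0) ∧ ∀ i j, i ≠ j → kk i ≠ kk j ∧ kk i ≠ -kk j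

def expf {n : ℕ} (kk : Fin n → ℤ) : Fin n ⊕ Fin n → ℤ := Sum.elim kk (fun i => -kk i)

lemma Dk_eq {n : ℕ} (kk : Fin n → ℤ) (w : ℂ) :
    Dk kk w = diagonal (fun a => w ^ expf kk a) := by
  have h : (Sum.elim (fun i => w ^ kk i) (fun i => w ^ (-kk i)))
      = fun a => w ^ expf kk a := by
    funext a
    cases a <;> simp [expf]
  rw [Dk, h]

lemma Dk_inv {n : ℕ} (kk : Fin n → ℤ) {w : ℂ} (hw : w ≠ 0) :
    (Dk kk w)⁻¹ = diagonal (fun a => w ^ (-expf kk a)) := by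
  apply inv_eq_right_inv
  rw [Dk_eq, diagonal_mul_diagonal]
  rw [← diagonal_one]
  refine congrArg _ (funext fun a => ?_)
  simp [_root_.zpow_neg, mul_inv_cancel₀ (zpow_ne_zero _ hw)]

lemma two_zpow_inj {m m' : ℤ} (h : (2:ℂ) ^ m = (2:ℂ) ^ m') : m = m' := by
  have : (2:ℝ) ^ m = (2:ℝ) ^ m' := by
    have := congrArg (fun z : ℂ => ‖z‖) h
    simpa [map_zpow₀, norm_zpow] using this
  exact zpow_right_injective₀ (by norm_num) (by norm_num) this

lemma struct {n : ℕ} (kk : Fin n → ℤ) (hreg : Regular kk) (J : Mat n ℂ)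
    (hJ : IsUnit J.det)
    (hconj : ∀ w : ℂ, w ≠ 0 → J * Dk kk w * J⁻¹ = (Dk kk w)⁻¹) :
    (∀ i j, J (Sum.inl i) (Sum.inl j) = 0) ∧ (∀ i j, J (Sum.inr i) (Sum.inr j) = 0) ∧
    (∀ i j, i ≠ j → J (Sum.inl i) (Sum.inr j) = 0) ∧
    (∀ i j, i ≠ j → J (Sum.inr i) (Sum.inl j) = 0) := by
  have hkey : ∀ a b, J a b ≠ 0 → expf kk b = -(expf kk a) := by
    intro a b hab
    have h2 := hconj 2 two_ne_zero
    have h2' : J * Dk kk 2 = (Dk kk 2)⁻¹ * J := by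
      have := congrArg (· * J) h2
      simpa [Matrix.mul_assoc, Matrix.nonsing_inv_mul J hJ] using this
    rw [Dk_inv kk two_ne_zero, Dk_eq] at h2'
    have hent := congrFun (congrFun h2' a) b
    rw [Matrix.mul_diagonal, Matrix.diagonal_mul] at hent
    have : (2:ℂ) ^ expf kk b = (2:ℂ) ^ (-expf kk a) := by
      apply mul_left_cancel₀ hab
      rw [hent, mul_comm]
    exact two_zpow_inj this
  have hne : ∀ a b, expf kk b ≠ -(expf kk a) → J a b = 0 := by
    intro a b h
    by_contra hab
    exact h (hkey a b hab)
  refine ⟨fun i j => ?_, fun i j => ?_, fun i j hij => ?_, fun i j hij => ?_⟩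
  · apply hne
    simp only [expf, Sum.elim_inl]
    rcases eq_or_ne i j with rfl | hij
    · intro h
      exact hreg.1 i (by omega)
    · exact (hreg.2 j i (Ne.symm hij)).2
  · apply hne
    simp only [expf, Sum.elim_inr, neg_neg]
    rcases eq_or_ne i j with rfl | hij
    · intro h
      exact hreg.1 i (by omega)
    · intro h
      exact (hreg.2 j i (Ne.symm hij)).2 (by omega)
  · apply hne
    simp only [expf, Sum.elim_inl, Sum.elim_inr]
    intro h
    exact (hreg.2 j i (Ne.symm hij)).1 (by omega)
  · apply hne
    simp only [expf, Sum.elim_inl, Sum.elim_inr, neg_neg]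
    intro h
    exact (hreg.2 j i (Ne.symm hij)).1 h

lemma blockJ {n : ℕ} (J : Mat n ℂ)
    (h11 : ∀ i j, J (Sum.inl i) (Sum.inl j) = 0)
    (h22 : ∀ i j, J (Sum.inr i) (Sum.inr j) = 0)
    (h12 : ∀ i j, i ≠ j → J (Sum.inl i) (Sum.inr j) = 0)
    (h21 : ∀ i j, i ≠ j → J (Sum.inr i) (Sum.inl j) = 0) :
    J = fromBlocks 0 (diagonal fun i => J (Sum.inl i) (Sum.inr i))
        (diagonal fun i => J (Sum.inr i) (Sum.inl i)) 0 := by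
  ext a b
  cases a with
  | inl i => cases b with
    | inl j => simpa using h11 i j
    | inr j =>
      rcases eq_or_ne i j with rfl | hij
      · simp
      · simp [diagonal_apply_ne _ hij, h12 i j hij]
  | inr i => cases b with
    | inl j =>
      rcases eq_or_ne i j with rfl | hij
      · simp
      · simp [diagonal_apply_ne _ hij, h21 i j hij]
    | inr j => simpa using h22 i j

lemma detQ (n : ℕ) : (Qmat n).det = (-1 : ℂ) ^ n := by
  have h1 : (fromBlocks 0 1 (-1) 0 : Mat n ℂ)
      = fromBlocks 1 1 0 1 * fromBlocks 1 0 (-1) 1 * fromBlocks 1 1 0 1 := by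
    simp [fromBlocks_multiply]
  have hdet1 : (fromBlocks 0 1 (-1) 0 : Mat n ℂ).det = 1 := by
    rw [h1, det_mul, det_mul, det_fromBlocks_zero₂₁, det_fromBlocks_zero₁₂]
    simp
  have h2 : (fromBlocks 0 1 (-1) 0 : Mat n ℂ) = fromBlocks 1 0 0 (-1) * Qmat n := by
    simp [Qmat, fromBlocks_multiply]
  have hdn : (fromBlocks 1 0 0 (-1) : Mat n ℂ).det = (-1 : ℂ) ^ n := by
    rw [det_fromBlocks_zero₁₂]
    simp [det_neg]
  have : (1 : ℂ) = (-1 : ℂ) ^ n * (Qmat n).det := by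
    rw [h2, det_mul, hdn] at hdet1
    exact hdet1.symm
  have hsq2 : ((-1:ℂ)^n) * ((-1:ℂ)^n) = 1 := by
    rw [← mul_pow]; simp
  calc (Qmat n).det = ((-1:ℂ)^n * (-1:ℂ)^n) * (Qmat n).det := by rw [hsq2, one_mul]
    _ = (-1:ℂ)^n * ((-1:ℂ)^n * (Qmat n).det) := by ring
    _ = (-1:ℂ)^n := by rw [← this, mul_one]

lemma neg_one_blocks (n : ℕ) :
    (-1 : Mat n ℂ) = fromBlocks (-1) 0 0 (-1) := by
  rw [← fromBlocks_one (l := Fin n) (m := Fin n) (α := ℂ), fromBlocks_neg]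
  simp

lemma sq_entries {n : ℕ} (b c : Fin n → ℂ)
    (hsq : (fromBlocks 0 (diagonal b) (diagonal c) 0 : Mat n ℂ) *
      fromBlocks 0 (diagonal b) (diagonal c) 0 = -1) :
    ∀ i, b i * c i = -1 := by
  intro i
  rw [fromBlocks_multiply, neg_one_blocks] at hsq
  have h := congrFun (congrFun hsq (Sum.inl i)) (Sum.inl i)
  simpa [diagonal_mul_diagonal] using h

lemma orth_entries {n : ℕ} (b c : Fin n → ℂ) (ν : ℂ)
    (horth : (fromBlocks 0 (diagonal b) (diagonal c) 0 : Mat n ℂ)ᵀ * Qmat n *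
      fromBlocks 0 (diagonal b) (diagonal c) 0 = ν • Qmat n) :
    ∀ i, c i * b i = ν := by
  intro i
  rw [fromBlocks_transpose, Qmat, fromBlocks_multiply, fromBlocks_multiply,
    fromBlocks_smul] at horth
  have h := congrFun (congrFun horth (Sum.inl i)) (Sum.inr i)
  simpa [diagonal_mul_diagonal] using h

lemma detJ0 (n : ℕ) : (fromBlocks 0 1 (-1) 0 : Mat n ℂ).det = 1 := by
  have h1 : (fromBlocks 0 1 (-1) 0 : Mat n ℂ)
      = fromBlocks 1 1 0 1 * fromBlocks 1 0 (-1) 1 * fromBlocks 1 1 0 1 := by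
    simp [fromBlocks_multiply]
  rw [h1, det_mul, det_mul, det_fromBlocks_zero₂₁, det_fromBlocks_zero₁₂]
  simp

lemma J0_sq (n : ℕ) :
    (fromBlocks 0 1 (-1) 0 : Mat n ℂ) * fromBlocks 0 1 (-1) 0 = -1 := by
  rw [fromBlocks_multiply, neg_one_blocks]
  simp

lemma J0_inv (n : ℕ) :
    (fromBlocks 0 1 (-1) 0 : Mat n ℂ)⁻¹ = fromBlocks 0 (-1) 1 0 := by
  apply inv_eq_right_inv
  rw [fromBlocks_multiply, ← fromBlocks_one (l := Fin n) (m := Fin n) (α := ℂ)]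
  simp

lemma J0_orth (n : ℕ) :
    (fromBlocks 0 1 (-1) 0 : Mat n ℂ)ᵀ * Qmat n * fromBlocks 0 1 (-1) 0
      = (-1 : ℂ) • Qmat n := by
  rw [Qmat, fromBlocks_transpose, fromBlocks_multiply, fromBlocks_multiply, fromBlocks_smul]
  simp

lemma J0_conj {n : ℕ} (kk : Fin n → ℤ) {w : ℂ} (hw : w ≠ 0) :
    (fromBlocks 0 1 (-1) 0 : Mat n ℂ) * Dk kk w * (fromBlocks 0 1 (-1) 0 : Mat n ℂ)⁻¹
      = (Dk kk w)⁻¹ := by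
  rw [J0_inv, Dk_inv kk hw, Dk]
  have h1 : (diagonal (Sum.elim (fun i => w ^ kk i) (fun i => w ^ (-kk i))) : Mat n ℂ)
      = fromBlocks (diagonal fun i => w ^ kk i) 0 0 (diagonal fun i => w ^ (-kk i)) := by
    simp
  have h2 : (diagonal (fun a => w ^ (-expf kk a)) : Mat n ℂ)
      = fromBlocks (diagonal fun i => w ^ (-kk i)) 0 0 (diagonal fun i => w ^ kk i) := by
    have hfun : (fun a => w ^ (-expf kk a))
        = Sum.elim (fun i => w ^ (-kk i)) (fun i => w ^ kk i) := by
      funext a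
      cases a <;> simp [expf]
    rw [hfun, fromBlocks_diagonal]
  rw [h1, h2, fromBlocks_multiply, fromBlocks_multiply]
  simp

/-- There exists `J ∈ GSO_{2n}(ℂ)` with `J D_k(w) J⁻¹ = D_k(w)⁻¹` for all `w ∈ ℂ×` and
`J² = -1` iff `n` is even; moreover every such `J` has multiplier `-1`. -/
theorem gso_antiinvolution (n : ℕ) (hn : 1 ≤ n) (kk : Fin n → ℤ) (hreg : Regular kk) :
    ((∃ (J : Mat n ℂ) (ν : ℂ), inGSO n J ν ∧
        (∀ w : ℂ, w ≠ 0 → J * Dk kk w * J⁻¹ = (Dk kk w)⁻¹) ∧ J * J = -1) ↔ Even n) ∧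
    (∀ (J : Mat n ℂ) (ν : ℂ), inGSO n J ν →
        (∀ w : ℂ, w ≠ 0 → J * Dk kk w * J⁻¹ = (Dk kk w)⁻¹) → J * J = -1 → ν = -1) := by
  have nupart : ∀ (J : Mat n ℂ) (ν : ℂ), inGSO n J ν →
      (∀ w : ℂ, w ≠ 0 → J * Dk kk w * J⁻¹ = (Dk kk w)⁻¹) → J * J = -1 → ν = -1 := by
    intro J ν hJ hconj hsq
    obtain ⟨⟨hdet, hν0, horth⟩, hdetn⟩ := hJ
    obtain ⟨h11, h22, h12, h21⟩ := struct kk hreg J hdet hconj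
    have hJeq := blockJ J h11 h22 h12 h21
    rw [hJeq] at hsq horth
    have hb := sq_entries _ _ hsq ⟨0, hn⟩
    have hc := orth_entries _ _ ν horth ⟨0, hn⟩
    rw [← hc, mul_comm]
    exact hb
  refine ⟨⟨?_, ?_⟩, nupart⟩
  · rintro ⟨J, ν, hJ, hconj, hsq⟩
    have hν := nupart J ν hJ hconj hsq
    obtain ⟨⟨hdet, hν0, horth⟩, hdetn⟩ := hJ
    obtain ⟨h11, h22, h12, h21⟩ := struct kk hreg J hdet hconj
    have hJeq := blockJ J h11 h22 h12 h21
    rw [hJeq] at hsq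
    have hbc := sq_entries _ _ hsq
    have hdJ : J.det = 1 := by
      rw [hJeq]
      have hfac : (fromBlocks 0 (diagonal fun i => J (Sum.inl i) (Sum.inr i))
            (diagonal fun i => J (Sum.inr i) (Sum.inl i)) 0 : Mat n ℂ)
          = fromBlocks (diagonal fun i => J (Sum.inl i) (Sum.inr i)) 0 0
            (diagonal fun i => J (Sum.inr i) (Sum.inl i)) * Qmat n := by
        rw [Qmat, fromBlocks_multiply]
        simp
      rw [hfac, det_mul, det_fromBlocks_zero₁₂, detQ, det_diagonal, det_diagonal]
      have hprod : (∏ i, J (Sum.inl i) (Sum.inr i)) * (∏ i, J (Sum.inr i) (Sum.inl i))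
          = (-1 : ℂ) ^ n := by
        rw [← Finset.prod_mul_distrib]
        rw [Finset.prod_congr rfl (fun i _ => hbc i), Finset.prod_const]
        simp
      rw [hprod, ← mul_pow]
      simp
    rw [hdJ, hν] at hdetn
    by_contra hodd
    rw [Nat.not_even_iff_odd] at hodd
    rw [hodd.neg_one_pow] at hdetn
    norm_num at hdetn
  · intro heven
    refine ⟨fromBlocks 0 1 (-1) 0, -1, ⟨⟨?_, ?_, ?_⟩, ?_⟩, ?_, ?_⟩
    · rw [detJ0]
      exact isUnit_one
    · norm_num
    · exact J0_orth n
    · rw [detJ0, heven.neg_one_pow]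
    · exact fun w hw => J0_conj kk hw
    · exact J0_sq n
end
end

section
/- Let n ≥ 1, let k = (k_1, …, k_n) be a regular tuple of integers, and let h denote the 2n×2n permutation matrix swapping the n-th and 2n-th standard basis vectors and fixing all others. Suppose J ∈ GO_{2n}(ℂ) satisfies (Jh) D_k(w) (Jh)^{−1} = D_k(w)^{−1} for every w ∈ ℂ× and (Jh)² = −1. Then ν(J) = −1 and det J = −1; consequently J lies in GSO_{2n}(ℂ) if and only if n is odd. -/
open Matrix

noncomputable section

/-- The 2n×2n permutation matrix swapping the n-th and 2n-th standard basis vectors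
(i.e. the basis vectors indexed by `Sum.inl (n-1)` and `Sum.inr (n-1)`) and fixing
all others. -/
def hmat (n : ℕ) (hn : 0 < n) : Mat n ℂ :=
  Matrix.of fun i j =>
    if j = Equiv.swap (Sum.inl (⟨n - 1, by omega⟩ : Fin n))
        (Sum.inr (⟨n - 1, by omega⟩ : Fin n)) i then 1 else 0

/-! ### Auxiliary material -/

lemma two_zpow_inj_s10 {a b : ℤ} (h : (2 : ℂ) ^ a = (2 : ℂ) ^ b) : a = b := by
  have h2 : ((2 : ℝ) : ℂ) ^ a = ((2 : ℝ) : ℂ) ^ b := by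
    rw [show ((2 : ℝ) : ℂ) = (2 : ℂ) by norm_num]; exact h
  rw [← Complex.ofReal_zpow, ← Complex.ofReal_zpow] at h2
  have h3 : (2 : ℝ) ^ a = (2 : ℝ) ^ b := by exact_mod_cast h2
  exact zpow_right_injective₀ (by norm_num) (by norm_num) h3

/-- The index `n-1` in `Fin n`. -/
def midx (n : ℕ) (hn : 0 < n) : Fin n := ⟨n - 1, by omega⟩

/-- The transposition implemented by `hmat`. -/
def tauPerm (n : ℕ) (hn : 0 < n) : Equiv.Perm (Fin n ⊕ Fin n) :=
  Equiv.swap (Sum.inl (midx n hn)) (Sum.inr (midx n hn))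

lemma hmat_eq (n : ℕ) (hn : 0 < n) : hmat n hn = (tauPerm n hn).toPEquiv.toMatrix := by
  ext i j
  simp [hmat, tauPerm, midx, PEquiv.toMatrix_apply, Equiv.toPEquiv_apply, eq_comm]

lemma hmat_transpose (n : ℕ) (hn : 0 < n) : (hmat n hn)ᵀ = hmat n hn := by
  ext i j
  simp only [transpose_apply, hmat, Matrix.of_apply]
  congr 1
  simp only [eq_iff_iff]
  constructor
  · rintro rfl; simp
  · rintro rfl; simp

lemma hmat_mul_self (n : ℕ) (hn : 0 < n) : hmat n hn * hmat n hn = 1 := by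
  rw [hmat_eq, PEquiv.toMatrix_toPEquiv_mul]
  ext i j
  simp [PEquiv.toMatrix_apply, Equiv.toPEquiv_apply, tauPerm, Equiv.swap_apply_self,
    Matrix.one_apply, eq_comm]

lemma det_hmat (n : ℕ) (hn : 0 < n) : (hmat n hn).det = -1 := by
  have h : hmat n hn = (tauPerm n hn).permMatrix ℂ := hmat_eq n hn
  rw [h, Matrix.det_permutation, tauPerm, Equiv.Perm.sign_swap (by simp)]
  simp

lemma Qmat_eq (n : ℕ) :
    Qmat n = (Equiv.sumComm (Fin n) (Fin n) : Equiv.Perm (Fin n ⊕ Fin n)).toPEquiv.toMatrix := by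
  ext p q
  rcases p with a | a <;> rcases q with b | b <;>
    simp [Qmat, PEquiv.toMatrix_apply, Equiv.toPEquiv_apply, fromBlocks,
      Matrix.one_apply, eq_comm]

/-- The sign of the permutation swapping the two copies in `Fin n ⊕ Fin n`. -/
lemma sign_sumComm_self (n : ℕ) :
    Equiv.Perm.sign (Equiv.sumComm (Fin n) (Fin n) : Equiv.Perm (Fin n ⊕ Fin n))
      = (-1) ^ n := by
  have key := Equiv.Perm.sign_eq_sign_of_equiv
    (Equiv.prodCongrLeft (fun _ : Fin n => Equiv.swap true false))
    (Equiv.sumComm (Fin n) (Fin n)) (Equiv.boolProdEquivSum (Fin n)) ?_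
  · rw [← key, Equiv.Perm.sign_prodCongrLeft]
    simp [Equiv.Perm.sign_swap]
  · rintro ⟨b, a⟩
    cases b <;> simp [Equiv.boolProdEquivSum, Equiv.prodCongrLeft, Equiv.swap_apply_def]

lemma det_Qmat (n : ℕ) : (Qmat n).det = (-1) ^ n := by
  have h : Qmat n = Equiv.Perm.permMatrix ℂ
      (Equiv.sumComm (Fin n) (Fin n) : Equiv.Perm (Fin n ⊕ Fin n)) := Qmat_eq n
  rw [h, Matrix.det_permutation, sign_sumComm_self]
  push_cast
  ring

/-- If `J ∈ GO_{2n}(ℂ)` with `(Jh) D_k(w) (Jh)⁻¹ = D_k(w)⁻¹` for all `w ∈ ℂ×` and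
`(Jh)² = -1`, then `ν(J) = -1` and `det J = -1`; hence `J ∈ GSO_{2n}(ℂ)` iff
`n` is odd. -/
theorem go_h_antiinvolution (n : ℕ) (hn : 0 < n) (kk : Fin n → ℤ) (hreg : Regular kk)
    (J : Mat n ℂ) (ν : ℂ) (hJ : inGO n J ν)
    (hconj : ∀ w : ℂ, w ≠ 0 →
      (J * hmat n hn) * Dk kk w * (J * hmat n hn)⁻¹ = (Dk kk w)⁻¹)
    (hsq : (J * hmat n hn) * (J * hmat n hn) = -1) :
    ν = -1 ∧ J.det = -1 ∧ (inGSO n J ν ↔ Odd n) := by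
  obtain ⟨hJdet, hν0, hQ⟩ := hJ
  set M : Mat n ℂ := J * hmat n hn with hMdef
  have hJM : J = M * hmat n hn := by
    rw [hMdef, mul_assoc, hmat_mul_self, mul_one]
  have hMright : M * (-M) = 1 := by
    rw [mul_neg, hsq]; simp
  have hMunit : IsUnit M.det := Matrix.isUnit_det_of_right_inverse hMright
  -- the exponents
  set e : Fin n ⊕ Fin n → ℤ := Sum.elim kk (fun i => -kk i) with he
  have hD : ∀ w : ℂ, Dk kk w = Matrix.diagonal (fun p => w ^ e p) := by
    intro w
    unfold Dk
    refine congrArg Matrix.diagonal (funext fun p => ?_)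
    rcases p with a | a <;> simp [he, _root_.zpow_neg]
  have hDk_inv : ∀ w : ℂ, w ≠ 0 → (Dk kk w)⁻¹ = Dk kk w⁻¹ := by
    intro w hw
    apply Matrix.inv_eq_right_inv
    rw [hD, hD, diagonal_mul_diagonal, ← Matrix.diagonal_one]
    refine congrArg Matrix.diagonal (funext fun p => ?_)
    show w ^ e p * w⁻¹ ^ e p = 1
    rw [← mul_zpow, mul_inv_cancel₀ hw, _root_.one_zpow]
  have hrel : ∀ w : ℂ, w ≠ 0 → M * Dk kk w = Dk kk w⁻¹ * M := by
    intro w hw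
    have h1 := hconj w hw
    have h0 : M * Dk kk w * M⁻¹ * M = M * Dk kk w := by
      rw [mul_assoc (M * Dk kk w), Matrix.nonsing_inv_mul _ hMunit, mul_one]
    rw [← h0, h1, hDk_inv w hw]
  have hzero : ∀ p q, e q ≠ -e p → M p q = 0 := by
    intro p q hpq
    have h2 := hrel 2 (by norm_num)
    rw [hD, hD] at h2
    have h3 := Matrix.ext_iff.mpr h2 p q
    rw [Matrix.mul_diagonal, Matrix.diagonal_mul] at h3
    by_contra hne
    apply hpq
    have h4 : (2 : ℂ) ^ e q = (2 : ℂ)⁻¹ ^ e p :=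
      mul_left_cancel₀ hne (by rw [h3]; ring)
    rw [_root_.inv_zpow, ← _root_.zpow_neg] at h4
    exact two_zpow_inj_s10 h4
  have hll : ∀ a b : Fin n, M (Sum.inl a) (Sum.inl b) = 0 := by
    intro a b
    apply hzero
    simp only [he, Sum.elim_inl]
    rcases eq_or_ne a b with rfl | hab
    · have := hreg.1 a; omega
    · have := (hreg.2 b a (Ne.symm hab)).2; omega
  have hrr : ∀ a b : Fin n, M (Sum.inr a) (Sum.inr b) = 0 := by
    intro a b
    apply hzero
    simp only [he, Sum.elim_inr]
    rcases eq_or_ne a b with rfl | hab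
    · have := hreg.1 a; omega
    · have := (hreg.2 a b hab).2; omega
  have hlr : ∀ a b : Fin n, a ≠ b → M (Sum.inl a) (Sum.inr b) = 0 := by
    intro a b hab
    apply hzero
    simp only [he, Sum.elim_inl, Sum.elim_inr]
    have := (hreg.2 a b hab).1; omega
  have hrl : ∀ a b : Fin n, a ≠ b → M (Sum.inr a) (Sum.inl b) = 0 := by
    intro a b hab
    apply hzero
    simp only [he, Sum.elim_inl, Sum.elim_inr]
    have := (hreg.2 a b hab).1; omega
  set bb : Fin n → ℂ := fun i => M (Sum.inl i) (Sum.inr i) with hbb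
  set cc : Fin n → ℂ := fun i => M (Sum.inr i) (Sum.inl i) with hcc
  -- products of opposite entries are -1
  have hbc : ∀ i, bb i * cc i = -1 := by
    intro i
    have h5 := Matrix.ext_iff.mpr hsq (Sum.inl i) (Sum.inl i)
    rw [Matrix.mul_apply] at h5
    rw [Finset.sum_eq_single (Sum.inr i)] at h5
    · simpa using h5
    · rintro (a | a) - hne
      · rw [hll]; ring
      · rw [hrl a i (by simpa using hne)]; ring
    · intro habs
      exact absurd (Finset.mem_univ _) habs
  -- block decomposition of M
  have hMeq : M = Matrix.diagonal (Sum.elim bb cc)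
      * (Equiv.sumComm (Fin n) (Fin n) : Equiv.Perm (Fin n ⊕ Fin n)).toPEquiv.toMatrix := by
    ext p q
    rw [Matrix.diagonal_mul]
    rcases p with a | a <;> rcases q with b | b <;>
      simp only [PEquiv.toMatrix_apply, Equiv.toPEquiv_apply, Equiv.sumComm_apply,
        Sum.swap_inl, Sum.swap_inr, Sum.elim_inl, Sum.elim_inr, Option.mem_def,
        Option.some.injEq]
    · rw [hll]; simp
    · rcases eq_or_ne a b with rfl | hab
      · simp [hbb]
      · rw [hlr a b hab]; simp [hab, Ne.symm hab]
    · rcases eq_or_ne a b with rfl | hab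
      · simp [hcc]
      · rw [hrl a b hab]; simp [hab, Ne.symm hab]
    · rw [hrr]; simp
  -- multiplier is -1
  have hMQM : Mᵀ * Qmat n * M = ν • (hmat n hn * Qmat n * hmat n hn) := by
    have h6 : Jᵀ * Qmat n * J
        = (hmat n hn)ᵀ * (Mᵀ * Qmat n * M) * hmat n hn := by
      rw [hJM, Matrix.transpose_mul]
      noncomm_ring
    rw [h6, hmat_transpose] at hQ
    have h7 := congrArg (fun X => hmat n hn * X * hmat n hn) hQ
    calc Mᵀ * Qmat n * M
        = (hmat n hn * hmat n hn) * (Mᵀ * Qmat n * M)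
            * (hmat n hn * hmat n hn) := by
          rw [hmat_mul_self]; simp
      _ = hmat n hn * (hmat n hn * (Mᵀ * Qmat n * M) * hmat n hn) * hmat n hn := by
          noncomm_ring
      _ = hmat n hn * (ν • Qmat n) * hmat n hn := by rw [h7]
      _ = ν • (hmat n hn * Qmat n * hmat n hn) := by
          rw [Matrix.mul_smul, Matrix.smul_mul]
  have hν : ν = -1 := by
    have h8 := Matrix.ext_iff.mpr hMQM (Sum.inl (midx n hn)) (Sum.inr (midx n hn))
    have hRHS : (hmat n hn * Qmat n * hmat n hn)
        (Sum.inl (midx n hn)) (Sum.inr (midx n hn)) = 1 := by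
      rw [hmat_eq, PEquiv.toMatrix_toPEquiv_mul, PEquiv.mul_toMatrix_toPEquiv]
      simp only [Matrix.submatrix_apply, id_eq, tauPerm]
      simp only [Equiv.symm_swap, Equiv.swap_apply_left, Equiv.swap_apply_right]
      simp [Qmat, fromBlocks]
    have hLHS : (Mᵀ * Qmat n * M)
        (Sum.inl (midx n hn)) (Sum.inr (midx n hn)) = -1 := by
      rw [mul_assoc, Qmat_eq, PEquiv.toMatrix_toPEquiv_mul, Matrix.mul_apply]
      rw [Finset.sum_eq_single (Sum.inr (midx n hn))]
      · simp only [Matrix.transpose_apply, Matrix.submatrix_apply, id_eq,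
          Equiv.sumComm_apply, Sum.swap_inr]
        rw [mul_comm]
        exact hbc (midx n hn)
      · rintro (a | a) - hne
        · rw [Matrix.transpose_apply, hll]; ring
        · rw [Matrix.transpose_apply, hrl a (midx n hn) (by simpa using hne)]; ring
      · intro habs
        exact absurd (Finset.mem_univ _) habs
    rw [hLHS, Matrix.smul_apply, hRHS, smul_eq_mul, mul_one] at h8
    exact h8.symm
  -- determinant computation
  have hdetM : M.det = 1 := by
    rw [hMeq, Matrix.det_mul, Matrix.det_diagonal]
    have h9 : ((Equiv.sumComm (Fin n) (Fin n) :
        Equiv.Perm (Fin n ⊕ Fin n)).toPEquiv.toMatrix : Mat n ℂ).det = (-1) ^ n := by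
      rw [← Qmat_eq]; exact det_Qmat n
    rw [h9, Fintype.prod_sum_type]
    simp only [Sum.elim_inl, Sum.elim_inr]
    have h10 : (∏ i, bb i) * (∏ i, cc i) = (-1 : ℂ) ^ n := by
      rw [← Finset.prod_mul_distrib]
      rw [Finset.prod_congr rfl (fun i _ => hbc i)]
      simp
    rw [h10, ← mul_pow]
    simp
  have hdetJ : J.det = -1 := by
    rw [hJM, Matrix.det_mul, hdetM, det_hmat, one_mul]
  refine ⟨hν, hdetJ, ?_⟩
  constructor
  · rintro ⟨-, hdet⟩
    rw [hdetJ, hν] at hdet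
    rcases Nat.even_or_odd n with hev | hod
    · exfalso
      rw [hev.neg_one_pow] at hdet
      norm_num at hdet
    · exact hod
  · intro hod
    exact ⟨⟨hJdet, hν0, hQ⟩, by rw [hdetJ, hν, hod.neg_one_pow]⟩
end
end
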